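/- Let n ≥ 1, let R : ℝ → Matrix (Fin n) (Fin n) ℝ be continuous with R(t) symmetric for every t, let α ≥ 1 and t > 0. Let S be a Lagrangian Jacobi solution along R with S(0) = 1 such that S(u) is invertible and ‖S(u) x‖ ≤ α ‖x‖ for all u ∈ [0, t] and all x ∈ ℝⁿ, and let S_t be the Jacobi solution along R with S_t(0) = 1 and S_t(t) = 0. Then for every x ∈ ℝⁿ, ⟨(S'(0) − S_t'(0)) x, x⟩ ≤ (α² / t) ⟨x, x⟩. -/

import Mathlib

open Matrix MeasureTheory

attribute [local instance] Matrix.normedAddCommGroup Matrix.normedSpace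

/-- A Jacobi solution along `R`: a twice continuously differentiable matrix-valued
map `Y` satisfying `Y'' + R Y = 0`. -/
def IsJacobi {n : ℕ} (R Y : ℝ → Matrix (Fin n) (Fin n) ℝ) : Prop :=
  ContDiff ℝ 2 Y ∧ ∀ t : ℝ, deriv (deriv Y) t + R t * Y t = 0

/-- A Lagrangian (self-conjugate) solution: the Wronskian `W(Y,Y)` vanishes. -/
def IsLagrangian {n : ℕ} (Y : ℝ → Matrix (Fin n) (Fin n) ℝ) : Prop :=
  ∀ t : ℝ, (deriv Y t)ᵀ * Y t = (Y t)ᵀ * deriv Y t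

/-- The Euclidean norm on `ℝⁿ`. -/
noncomputable def euclNorm {n : ℕ} (x : Fin n → ℝ) : ℝ :=
  Real.sqrt (x ⬝ᵥ x)

section Aux
variable {n : ℕ}

lemma hasDerivAt_matrix {f : ℝ → Matrix (Fin n) (Fin n) ℝ} {f' : Matrix (Fin n) (Fin n) ℝ}
    {x : ℝ} : HasDerivAt f f' x ↔ ∀ i j, HasDerivAt (fun t => f t i j) (f' i j) x := by
  exact (hasDerivAt_pi (φ := f) (φ' := f') (x := x)).trans
    (forall_congr' fun i => hasDerivAt_pi)

lemma HasDerivAt.matMul {f g : ℝ → Matrix (Fin n) (Fin n) ℝ} {f' g' : Matrix (Fin n) (Fin n) ℝ}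
    {x : ℝ} (hf : HasDerivAt f f' x) (hg : HasDerivAt g g' x) :
    HasDerivAt (fun t => f t * g t) (f' * g x + f x * g') x := by
  rw [hasDerivAt_matrix] at hf hg ⊢
  intro i j
  simp only [Matrix.add_apply, Matrix.mul_apply]
  have := HasDerivAt.fun_sum (u := (Finset.univ : Finset (Fin n)))
    (fun k _ => ((hf i k).mul (hg k j)))
  simpa [Finset.sum_add_distrib] using this

lemma HasDerivAt.matTranspose {f : ℝ → Matrix (Fin n) (Fin n) ℝ} {f' : Matrix (Fin n) (Fin n) ℝ}
    {x : ℝ} (hf : HasDerivAt f f' x) :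
    HasDerivAt (fun t => (f t)ᵀ) f'ᵀ x := by
  rw [hasDerivAt_matrix] at hf ⊢
  exact fun i j => hf j i

lemma norm_matMul_le (A B : Matrix (Fin n) (Fin n) ℝ) : ‖A * B‖ ≤ (n : ℝ) * ‖A‖ * ‖B‖ := by
  refine (Matrix.norm_le_iff (by positivity)).2 fun i j => ?_
  rw [Matrix.mul_apply]
  calc ‖∑ k, A i k * B k j‖ ≤ ∑ k, ‖A i k * B k j‖ := norm_sum_le _ _
    _ ≤ ∑ _k : Fin n, ‖A‖ * ‖B‖ := Finset.sum_le_sum fun k _ => by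
        rw [norm_mul]
        exact mul_le_mul (Matrix.norm_entry_le_entrywise_sup_norm A)
          (Matrix.norm_entry_le_entrywise_sup_norm B) (norm_nonneg _) (norm_nonneg _)
    _ = (n : ℝ) * ‖A‖ * ‖B‖ := by simp [Finset.sum_const, mul_assoc]

lemma continuousOn_matrix_inv {f : ℝ → Matrix (Fin n) (Fin n) ℝ} (hf : Continuous f) :
    ContinuousOn (fun u => (f u)⁻¹) {u | (f u).det ≠ 0} := by
  have h : ∀ u, (f u)⁻¹ = (f u).det⁻¹ • (f u).adjugate := fun u => by
    rw [Matrix.inv_def, Ring.inverse_eq_inv']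
  simp only [h]
  exact ContinuousOn.smul ((hf.matrix_det.continuousOn).inv₀ fun u hu => hu)
    hf.matrix_adjugate.continuousOn

lemma continuous_matrix_elem (i j : Fin n) :
    Continuous fun A : Matrix (Fin n) (Fin n) ℝ => A i j :=
  (continuous_apply j).comp (continuous_apply i)

lemma dotProduct_self_nonneg' (v : Fin n → ℝ) : 0 ≤ v ⬝ᵥ v :=
  Finset.sum_nonneg fun i _ => mul_self_nonneg _

lemma dotProduct_sq_le (a b : Fin n → ℝ) : (a ⬝ᵥ b) ^ 2 ≤ (a ⬝ᵥ a) * (b ⬝ᵥ b) := by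
  have := Finset.sum_mul_sq_le_sq_mul_sq Finset.univ a b
  simpa [dotProduct, sq] using this

lemma quad_inv_lower (A : Matrix (Fin n) (Fin n) ℝ) (hu : IsUnit A) (α : ℝ) (hα : 1 ≤ α)
    (hbd : ∀ x : Fin n → ℝ, euclNorm (A *ᵥ x) ≤ α * euclNorm x) (y : Fin n → ℝ) :
    (1 / α ^ 2) * (y ⬝ᵥ y) ≤ ((Aᵀ * A)⁻¹ *ᵥ y) ⬝ᵥ y := by
  have hα0 : (0:ℝ) < α := lt_of_lt_of_le one_pos hα
  have hdet : IsUnit (Aᵀ * A).det := by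
    rw [Matrix.det_mul, Matrix.det_transpose]
    exact ((Matrix.isUnit_iff_isUnit_det A).1 hu).mul ((Matrix.isUnit_iff_isUnit_det A).1 hu)
  set B := Aᵀ * A with hB
  set z := B⁻¹ *ᵥ y with hz
  have hBz : B *ᵥ z = y := by
    rw [hz, Matrix.mulVec_mulVec, Matrix.mul_nonsing_inv _ hdet, Matrix.one_mulVec]
  have hform : ∀ v w : Fin n → ℝ, (B *ᵥ v) ⬝ᵥ w = (A *ᵥ v) ⬝ᵥ (A *ᵥ w) := by
    intro v w
    rw [hB, ← Matrix.mulVec_mulVec, Matrix.mulVec_transpose, ← Matrix.dotProduct_mulVec]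
  have hq0 : 0 ≤ z ⬝ᵥ y := by
    have h := hform z z
    rw [hBz] at h
    calc (0:ℝ) ≤ (A *ᵥ z) ⬝ᵥ (A *ᵥ z) := dotProduct_self_nonneg' _
      _ = z ⬝ᵥ y := by rw [← h, dotProduct_comm]
  have hyy : (A *ᵥ z) ⬝ᵥ (A *ᵥ y) = y ⬝ᵥ y := by rw [← hform, hBz]
  have hzz : (A *ᵥ z) ⬝ᵥ (A *ᵥ z) = z ⬝ᵥ y := by
    rw [← hform, hBz, dotProduct_comm]
  have hAy : (A *ᵥ y) ⬝ᵥ (A *ᵥ y) ≤ α ^ 2 * (y ⬝ᵥ y) := by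
    have h1 := hbd y
    have h2 : (A *ᵥ y) ⬝ᵥ (A *ᵥ y) = (euclNorm (A *ᵥ y)) ^ 2 := by
      rw [euclNorm, Real.sq_sqrt (dotProduct_self_nonneg' _)]
    have h3 : (euclNorm (A *ᵥ y)) ^ 2 ≤ (α * euclNorm y) ^ 2 :=
      pow_le_pow_left₀ (Real.sqrt_nonneg _) h1 2
    rw [h2]
    calc (euclNorm (A *ᵥ y)) ^ 2 ≤ (α * euclNorm y) ^ 2 := h3
      _ = α ^ 2 * (y ⬝ᵥ y) := by
        rw [mul_pow, euclNorm, Real.sq_sqrt (dotProduct_self_nonneg' _)]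
  have hcs := dotProduct_sq_le (A *ᵥ z) (A *ᵥ y)
  rw [hyy, hzz] at hcs
  have hgoal : ((B⁻¹ *ᵥ y) ⬝ᵥ y) = z ⬝ᵥ y := rfl
  rw [hgoal]
  rcases eq_or_lt_of_le (dotProduct_self_nonneg' y) with h0 | h0
  · rw [← h0, mul_zero]
    exact hq0
  · have key : y ⬝ᵥ y ≤ (z ⬝ᵥ y) * α ^ 2 := by
      refine le_of_mul_le_mul_right ?_ h0
      nlinarith [mul_le_mul_of_nonneg_left hAy hq0]
    rw [one_div, inv_mul_le_iff₀ (by positivity)]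
    linarith [key]

end Aux

set_option maxHeartbeats 2000000 in
/-- If `‖S(u)x‖ ≤ α‖x‖` on `[0, t]`, then
`⟨(S'(0) − S_t'(0))x, x⟩ ≤ (α²/t)⟨x, x⟩`. -/
theorem upper_bound_deriv_diff {n : ℕ} (hn : 1 ≤ n)
    (R : ℝ → Matrix (Fin n) (Fin n) ℝ) (hRc : Continuous R)
    (hRsym : ∀ t : ℝ, (R t)ᵀ = R t)
    (α t : ℝ) (hα : 1 ≤ α) (ht : 0 < t)
    (S : ℝ → Matrix (Fin n) (Fin n) ℝ)
    (hS : IsJacobi R S) (hSL : IsLagrangian S) (hS0 : S 0 = 1)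
    (hSinv : ∀ u ∈ Set.Icc (0 : ℝ) t, IsUnit (S u))
    (hSup : ∀ u ∈ Set.Icc (0 : ℝ) t, ∀ x : Fin n → ℝ,
      euclNorm (S u *ᵥ x) ≤ α * euclNorm x)
    (St : ℝ → Matrix (Fin n) (Fin n) ℝ)
    (hSt : IsJacobi R St) (hSt0 : St 0 = 1) (hStt : St t = 0) :
    ∀ x : Fin n → ℝ,
      ((deriv S 0 - deriv St 0) *ᵥ x) ⬝ᵥ x ≤ (α ^ 2 / t) * (x ⬝ᵥ x) := by
  have hα0 : (0:ℝ) < α := lt_of_lt_of_le one_pos hα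
  have h21 : ((2 : WithTop ℕ∞)) = 1 + 1 := by norm_num
  have hSd1 := (contDiff_succ_iff_deriv (n := 1)).1 (h21 ▸ hS.1)
  have hStd1 := (contDiff_succ_iff_deriv (n := 1)).1 (h21 ▸ hSt.1)
  have hSdiff : Differentiable ℝ S := hSd1.1
  have hStdiff : Differentiable ℝ St := hStd1.1
  have hSderiv : ContDiff ℝ 1 (deriv S) := hSd1.2.2
  have hStderiv : ContDiff ℝ 1 (deriv St) := hStd1.2.2
  have hSd : ∀ u, HasDerivAt S (deriv S u) u := fun u => (hSdiff u).hasDerivAt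
  have hStd : ∀ u, HasDerivAt St (deriv St u) u := fun u => (hStdiff u).hasDerivAt
  have hSdd : ∀ u, HasDerivAt (deriv S) (deriv (deriv S) u) u :=
    fun u => ((hSderiv.differentiable one_ne_zero) u).hasDerivAt
  have hStdd : ∀ u, HasDerivAt (deriv St) (deriv (deriv St) u) u :=
    fun u => ((hStderiv.differentiable one_ne_zero) u).hasDerivAt
  have hS'' : ∀ u, deriv (deriv S) u = -(R u * S u) :=
    fun u => eq_neg_of_add_eq_zero_left (hS.2 u)
  have hSt'' : ∀ u, deriv (deriv St) u = -(R u * St u) :=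
    fun u => eq_neg_of_add_eq_zero_left (hSt.2 u)
  have hScont : Continuous S := hSdiff.continuous
  have hSdcont : Continuous (deriv S) := hSderiv.continuous
  -- the constant Wronskian
  set W₀ : Matrix (Fin n) (Fin n) ℝ := deriv S 0 - deriv St 0 with hW₀def
  have hSL0 : (deriv S 0)ᵀ = deriv S 0 := by
    have h := hSL 0
    rwa [hS0, mul_one, Matrix.transpose_one, one_mul] at h
  have hWconst : ∀ u, (deriv S u)ᵀ * St u - (S u)ᵀ * deriv St u = W₀ := by
    have hWd : ∀ u, HasDerivAt
        (fun u => (deriv S u)ᵀ * St u - (S u)ᵀ * deriv St u) 0 u := by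
      intro u
      have h1 := ((hSdd u).matTranspose).matMul (hStd u)
      have h2 := ((hSd u).matTranspose).matMul (hStdd u)
      have h3 := h1.fun_sub h2
      refine h3.congr_deriv ?_
      rw [hS'' u, hSt'' u]
      simp only [Matrix.transpose_neg, Matrix.transpose_mul, hRsym u]
      simp only [Matrix.neg_mul, Matrix.mul_neg, Matrix.mul_assoc]
      abel
    intro u
    have hc := is_const_of_deriv_eq_zero (f := fun u =>
        (deriv S u)ᵀ * St u - (S u)ᵀ * deriv St u)
      (fun x => (hWd x).differentiableAt) (fun x => (hWd x).deriv) u 0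
    rw [hc, hS0, hSt0, hSL0, mul_one, Matrix.transpose_one, one_mul]
  have hWrel : ∀ u, (S u)ᵀ * deriv St u = (deriv S u)ᵀ * St u - W₀ := by
    intro u
    have h := hWconst u
    rw [← h]
    abel
  -- invertibility data
  have hdetS : ∀ u ∈ Set.Icc (0:ℝ) t, ((S u)ᵀ * (S u)).det ≠ 0 := by
    intro u hu
    have h := ((Matrix.isUnit_iff_isUnit_det _).1 (hSinv u hu))
    rw [Matrix.det_mul, Matrix.det_transpose]
    exact (h.mul h).ne_zero
  have hUopen : IsOpen {u : ℝ | ((S u)ᵀ * (S u)).det ≠ 0} := by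
    have : Continuous fun u => ((S u)ᵀ * (S u)).det :=
      (hScont.matrix_transpose.matrix_mul hScont).matrix_det
    exact isOpen_compl_iff.2 (isClosed_singleton.preimage this)
  have hUsub : Set.Icc (0:ℝ) t ⊆ {u : ℝ | ((S u)ᵀ * (S u)).det ≠ 0} := hdetS
  set g : ℝ → Matrix (Fin n) (Fin n) ℝ := fun u => ((S u)ᵀ * (S u))⁻¹ with hgdef
  have hgU : ContinuousOn g {u : ℝ | ((S u)ᵀ * (S u)).det ≠ 0} :=
    continuousOn_matrix_inv (hScont.matrix_transpose.matrix_mul hScont)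
  have hgE : ∀ i j, ContinuousOn (fun s => g s i j)
      {u : ℝ | ((S u)ᵀ * (S u)).det ≠ 0} := by
    intro i j u hu
    exact ((continuous_matrix_elem i j).continuousAt).comp_continuousWithinAt (hgU u hu)
  -- the primitive of g
  set P : ℝ → Matrix (Fin n) (Fin n) ℝ :=
    fun u => Matrix.of fun i j => ∫ s in (0:ℝ)..u, g s i j with hPdef
  have hPapply : ∀ (u : ℝ) i j, P u i j = ∫ s in (0:ℝ)..u, g s i j := fun _ _ _ => rfl
  have hgInt : ∀ (i j) (u), u ∈ Set.Icc (0:ℝ) t →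
      IntervalIntegrable (fun s => g s i j) volume 0 u := by
    intro i j u hu
    apply ContinuousOn.intervalIntegrable
    apply (hgE i j).mono
    rw [Set.uIcc_of_le hu.1]
    exact subset_trans (Set.Icc_subset_Icc le_rfl hu.2) hUsub
  have hPd : ∀ u ∈ Set.Icc (0:ℝ) t, HasDerivAt P (g u) u := by
    intro u hu
    rw [hasDerivAt_matrix]
    intro i j
    exact intervalIntegral.integral_hasDerivAt_right (hgInt i j u hu)
      (ContinuousOn.stronglyMeasurableAtFilter hUopen (hgE i j) u (hUsub hu))
      ((hgE i j).continuousAt (hUopen.mem_nhds (hUsub hu)))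
  -- K and its derivative
  set K : ℝ → Matrix (Fin n) (Fin n) ℝ :=
    fun u => St u + S u * (P u * W₀) - S u with hKdef
  set K' : ℝ → Matrix (Fin n) (Fin n) ℝ :=
    fun u => deriv St u + (deriv S u * (P u * W₀) + S u * (g u * W₀)) - deriv S u with hK'def
  have hVd : ∀ u ∈ Set.Icc (0:ℝ) t, HasDerivAt (fun u => P u * W₀) (g u * W₀) u := by
    intro u hu
    have h := (hPd u hu).matMul (hasDerivAt_const (𝕜 := ℝ) u W₀)
    simpa using h
  have hKd : ∀ u ∈ Set.Icc (0:ℝ) t, HasDerivAt K (K' u) u := fun u hu =>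
    ((hStd u).add ((hSd u).matMul (hVd u hu))).sub (hSd u)
  -- the key algebraic identity
  have hSTK : ∀ u ∈ Set.Icc (0:ℝ) t, (S u)ᵀ * K' u = (deriv S u)ᵀ * K u := by
    intro u hu
    have e1 : (S u)ᵀ * (S u) * g u = 1 :=
      Matrix.mul_nonsing_inv _ (Ne.isUnit (hdetS u hu))
    have hsl := hSL u
    simp only [hKdef, hK'def, Matrix.mul_sub, Matrix.mul_add, ← Matrix.mul_assoc]
    rw [hWrel u, hsl, e1, one_mul]
    abel
  -- K' = Mf * K
  set Mf : ℝ → Matrix (Fin n) (Fin n) ℝ := fun u => ((S u)ᵀ)⁻¹ * (deriv S u)ᵀ with hMfdef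
  have hdetST : ∀ u ∈ Set.Icc (0:ℝ) t, IsUnit ((S u)ᵀ).det := by
    intro u hu
    rw [Matrix.det_transpose]
    exact (Matrix.isUnit_iff_isUnit_det _).1 (hSinv u hu)
  have hKeq : ∀ u ∈ Set.Icc (0:ℝ) t, K' u = Mf u * K u := by
    intro u hu
    calc K' u = ((S u)ᵀ)⁻¹ * ((S u)ᵀ * K' u) := by
          rw [← Matrix.mul_assoc, Matrix.nonsing_inv_mul _ (hdetST u hu), one_mul]
      _ = ((S u)ᵀ)⁻¹ * ((deriv S u)ᵀ * K u) := by rw [hSTK u hu]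
      _ = Mf u * K u := by rw [hMfdef, Matrix.mul_assoc]
  -- bound on Mf and Gronwall
  have hMc : ContinuousOn Mf (Set.Icc (0:ℝ) t) := by
    apply ContinuousOn.mul
    · apply (continuousOn_matrix_inv hScont.matrix_transpose).mono
      intro u hu
      simp only [Set.mem_setOf_eq, Matrix.det_transpose]
      exact ((Matrix.isUnit_iff_isUnit_det _).1 (hSinv u hu)).ne_zero
    · exact hSdcont.matrix_transpose.continuousOn
  obtain ⟨B, hB⟩ := (isCompact_Icc (a := (0:ℝ)) (b := t)).exists_bound_of_continuousOn hMc
  have hKcont : ContinuousOn K (Set.Icc (0:ℝ) t) := fun u hu =>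
    ((hKd u hu).continuousAt).continuousWithinAt
  have hK0 : K 0 = 0 := by
    have hP0 : P 0 = 0 := by
      ext i j
      simp [hPapply, intervalIntegral.integral_same]
    simp [hKdef, hP0, hS0, hSt0]
  have hbound : ∀ x ∈ Set.Ico (0:ℝ) t, ‖K' x‖ ≤ (n * B) * ‖K x‖ + 0 := by
    intro x hx
    have hx' : x ∈ Set.Icc (0:ℝ) t := Set.Ico_subset_Icc_self hx
    rw [hKeq x hx', add_zero]
    calc ‖Mf x * K x‖ ≤ (n : ℝ) * ‖Mf x‖ * ‖K x‖ := norm_matMul_le _ _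
      _ ≤ (n * B) * ‖K x‖ := by
          apply mul_le_mul_of_nonneg_right _ (norm_nonneg _)
          exact mul_le_mul_of_nonneg_left (hB x hx') (by positivity)
  have hgron := norm_le_gronwallBound_of_norm_deriv_right_le (f := K) (f' := K')
      (δ := 0) (K := n * B) (ε := 0) (a := 0) (b := t) hKcont
      (fun x hx => ((hKd x (Set.Ico_subset_Icc_self hx)).hasDerivWithinAt))
      (by rw [hK0]; simp) hbound
  have hKt : K t = 0 := by
    have h := hgron t ⟨ht.le, le_rfl⟩
    rw [gronwallBound_ε0_δ0] at h
    exact norm_le_zero_iff.1 h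
  -- conclude P t * W₀ = 1
  have hdetSt' : IsUnit (S t).det := (Matrix.isUnit_iff_isUnit_det _).1 (hSinv t ⟨ht.le, le_rfl⟩)
  have hAW : P t * W₀ = 1 := by
    have h1 : S t * (P t * W₀) = S t := by
      have h := hKt
      rw [hKdef] at h
      simp only [hStt, zero_add] at h
      exact sub_eq_zero.1 h
    calc P t * W₀ = (S t)⁻¹ * (S t * (P t * W₀)) := by
          rw [← Matrix.mul_assoc, Matrix.nonsing_inv_mul _ hdetSt', one_mul]
      _ = (S t)⁻¹ * S t := by rw [h1]
      _ = 1 := Matrix.nonsing_inv_mul _ hdetSt'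
  -- quadratic lower bound for P t
  have hquad : ∀ y : Fin n → ℝ, (t / α ^ 2) * (y ⬝ᵥ y) ≤ (P t *ᵥ y) ⬝ᵥ y := by
    intro y
    have htI : t ∈ Set.Icc (0:ℝ) t := ⟨ht.le, le_rfl⟩
    have hint : ∀ i j, IntervalIntegrable (fun s => g s i j * (y j * y i)) volume 0 t :=
      fun i j => (hgInt i j t htI).mul_const _
    have hexch : (P t *ᵥ y) ⬝ᵥ y = ∫ s in (0:ℝ)..t, (g s *ᵥ y) ⬝ᵥ y := by
      calc (P t *ᵥ y) ⬝ᵥ y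
          = ∑ i, ∑ j, (∫ s in (0:ℝ)..t, g s i j) * (y j * y i) := by
            simp [dotProduct, Matrix.mulVec, Finset.sum_mul, mul_assoc, hPapply]
        _ = ∑ i, ∑ j, ∫ s in (0:ℝ)..t, g s i j * (y j * y i) := by
            refine Finset.sum_congr rfl fun i _ => Finset.sum_congr rfl fun j _ => ?_
            rw [intervalIntegral.integral_mul_const]
        _ = ∫ s in (0:ℝ)..t, ∑ i, ∑ j, g s i j * (y j * y i) := by
            have hrow : ∀ i : Fin n, IntervalIntegrable
                (fun s => ∑ j, g s i j * (y j * y i)) volume 0 t := fun i => by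
              have h := IntervalIntegrable.sum (f := fun j s => g s i j * (y j * y i))
                Finset.univ (fun j _ => hint i j)
              simpa [Finset.sum_fn] using h
            rw [intervalIntegral.integral_finset_sum
              (f := fun i s => ∑ j, g s i j * (y j * y i)) (fun i _ => hrow i)]
            exact Finset.sum_congr rfl fun i _ =>
              (intervalIntegral.integral_finset_sum
                (f := fun j s => g s i j * (y j * y i)) (fun j _ => hint i j)).symm
        _ = ∫ s in (0:ℝ)..t, (g s *ᵥ y) ⬝ᵥ y := by
            refine intervalIntegral.integral_congr fun s _ => ?_
            simp [dotProduct, Matrix.mulVec, Finset.sum_mul, mul_assoc]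
    have hcq : Continuous fun A : Matrix (Fin n) (Fin n) ℝ => (A *ᵥ y) ⬝ᵥ y := by
      simp only [dotProduct, Matrix.mulVec]
      exact continuous_finset_sum _ fun i _ =>
        (continuous_finset_sum _ fun j _ =>
          (((continuous_apply j).comp (continuous_apply i)).mul continuous_const)).mul
          continuous_const
    have hintq : IntervalIntegrable (fun s => (g s *ᵥ y) ⬝ᵥ y) volume 0 t := by
      apply ContinuousOn.intervalIntegrable
      apply (hcq.comp_continuousOn (hgU.mono ?_))
      rw [Set.uIcc_of_le ht.le]
      exact hUsub
    have hptw : ∀ s ∈ Set.Icc (0:ℝ) t, (1 / α ^ 2) * (y ⬝ᵥ y) ≤ (g s *ᵥ y) ⬝ᵥ y :=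
      fun s hs => quad_inv_lower (S s) (hSinv s hs) α hα (hSup s hs) y
    have hmono : ∫ _s in (0:ℝ)..t, (1 / α ^ 2) * (y ⬝ᵥ y) ≤
        ∫ s in (0:ℝ)..t, (g s *ᵥ y) ⬝ᵥ y :=
      intervalIntegral.integral_mono_on ht.le (intervalIntegrable_const) hintq hptw
    rw [hexch]
    calc (t / α ^ 2) * (y ⬝ᵥ y) = ∫ _s in (0:ℝ)..t, (1 / α ^ 2) * (y ⬝ᵥ y) := by
          rw [intervalIntegral.integral_const, smul_eq_mul]
          ring
      _ ≤ _ := hmono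
  -- final computation
  intro x
  have hxy : P t *ᵥ (W₀ *ᵥ x) = x := by
    rw [Matrix.mulVec_mulVec, hAW, Matrix.one_mulVec]
  set y := W₀ *ᵥ x with hydef
  have hq := hquad y
  rw [hxy] at hq
  have hq' : t * (y ⬝ᵥ y) ≤ α ^ 2 * (y ⬝ᵥ x) := by
    rw [div_mul_eq_mul_div, div_le_iff₀ (by positivity)] at hq
    calc t * (y ⬝ᵥ y) ≤ (x ⬝ᵥ y) * α ^ 2 := hq
      _ = α ^ 2 * (y ⬝ᵥ x) := by rw [dotProduct_comm]; ring
  have hcs := dotProduct_sq_le y x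
  have hxx := dotProduct_self_nonneg' x
  have hyy := dotProduct_self_nonneg' y
  have hq0 : 0 ≤ y ⬝ᵥ x := by
    nlinarith [le_trans (mul_nonneg ht.le hyy) hq', pow_pos hα0 2]
  rw [div_mul_eq_mul_div, le_div_iff₀ ht]
  -- goal : y ⬝ᵥ x * t ≤ α ^ 2 * (x ⬝ᵥ x)
  rcases eq_or_lt_of_le hq0 with h0 | h0
  · rw [← h0, zero_mul]
    positivity
  · nlinarith [mul_le_mul_of_nonneg_left hcs ht.le,
      mul_le_mul_of_nonneg_right hq' hxx, mul_pos h0 ht]
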